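/- arXiv:0801.1207 — 2 statements merged into one kernel-verified Lean document; each statement's English description precedes it below -/
import Mathlib

section
/- For the conjecture's case n = 2: let A be a ring with an increasing ℕ-filtration F whose associated graded ring is a domain, and let g ∈ GL_2(F(0)) be a product of at most two elementary 2×2 matrices over A. Then g is a product of elementary matrices over F(0). -/
/-- An increasing exhaustive `ℕ`-filtration on a ring `A` whose associated graded
ring is a (nonzero) domain.  The field `gr_domain` is the elementwise translation of
the statement that the product of two nonzero homogeneous elements of `gr_F A` is
nonzero. -/
structure GrDomainFiltration (A : Type*) [Ring A] where
  F : ℕ → AddSubgroup A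
  mono : Monotone F
  exhaustive : ∀ a : A, ∃ n, a ∈ F n
  one_mem : (1 : A) ∈ F 0
  mul_mem : ∀ {i j : ℕ} {a b : A}, a ∈ F i → b ∈ F j → a * b ∈ F (i + j)
  nontrivial : (0 : A) ≠ 1
  gr_domain : ∀ {i j : ℕ} {a b : A}, a ∈ F i → b ∈ F j → a ≠ 0 → b ≠ 0 →
    (∀ k, k < i → a ∉ F k) → (∀ k, k < j → b ∉ F k) →
    a * b ≠ 0 ∧ ∀ k, k < i + j → a * b ∉ F k

/-- The degree of an element: the least `n` with `a ∈ F n`. -/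
noncomputable def GrDomainFiltration.deg {A : Type*} [Ring A] (fil : GrDomainFiltration A) (a : A) : ℕ :=
  sInf {n | a ∈ fil.F n}

open Matrix

lemma elem_entry {A : Type*} [Ring A] (i j : Fin 2) (hij : i ≠ j) (c : A) :
    (1 + single i j c) i j = c := by
  simp [Matrix.one_apply_ne hij]

lemma elem_mul_same {A : Type*} [Ring A] (i j : Fin 2) (hij : i ≠ j) (c c' : A) :
    (1 + single i j c) * (1 + single i j c')
      = 1 + single i j (c + c') := by
  rw [add_mul, mul_add, mul_add,
    Matrix.single_mul_single_of_ne (h := Ne.symm hij), single_add]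
  simp only [one_mul, mul_one]
  abel

lemma elem_mul_swap_fst {A : Type*} [Ring A] (i j : Fin 2) (hij : i ≠ j) (c c' : A) :
    ((1 + single i j c) * (1 + single j i c')) i j = c := by
  simp [add_mul, mul_add, Matrix.one_apply_ne hij,
    Matrix.single_mul_single_same,
    single_apply_of_ne j i c' i j (fun h => hij h.1.symm),
    single_apply_of_ne i i (c*c') i j (fun h => hij h.2)]

lemma elem_mul_swap_snd {A : Type*} [Ring A] (i j : Fin 2) (hij : i ≠ j) (c c' : A) :
    ((1 + single i j c) * (1 + single j i c')) j i = c' := by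
  simp [add_mul, mul_add, Matrix.one_apply_ne hij.symm,
    Matrix.single_mul_single_same,
    single_apply_of_ne i j c j i (fun h => hij h.1),
    single_apply_of_ne i i (c*c') j i (fun h => hij h.1)]

lemma fin2_pos (i₁ j₁ i₂ j₂ : Fin 2) (h1 : i₁ ≠ j₁) (h2 : i₂ ≠ j₂) :
    (i₁ = i₂ ∧ j₁ = j₂) ∨ (i₁ = j₂ ∧ j₁ = i₂) := by
  revert h1 h2
  fin_cases i₁ <;> fin_cases j₁ <;> fin_cases i₂ <;> fin_cases j₂ <;> decide

/-- Case `n = 2` of the conjecture, for products of at most two elementary matrices: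
if `g` has entries in `F 0`, is invertible over `F 0`, and is a product of at most
two elementary matrices over `A`, then `g` is a product of elementary matrices
with coefficients in `F 0`. -/
theorem conjecture_n2_len2 {A : Type*} [Ring A] (fil : GrDomainFiltration A)
    (g h : Matrix (Fin 2) (Fin 2) A)
    (hg : ∀ i j, g i j ∈ fil.F 0)
    (hh : ∀ i j, h i j ∈ fil.F 0)
    (hinv : g * h = 1 ∧ h * g = 1)
    (L : List (Matrix (Fin 2) (Fin 2) A))
    (hlen : L.length ≤ 2)
    (hL : ∀ M ∈ L, ∃ (i j : Fin 2) (c : A), i ≠ j ∧ M = 1 + Matrix.single i j c)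
    (hprod : g = L.prod) :
    ∃ L' : List (Matrix (Fin 2) (Fin 2) A),
      (∀ M ∈ L', ∃ (i j : Fin 2) (c : A), i ≠ j ∧ c ∈ fil.F 0 ∧
        M = 1 + Matrix.single i j c) ∧
      g = L'.prod := by
  match L, hlen with
  | [], _ =>
    exact ⟨[], by simp, hprod⟩
  | [M], _ =>
    obtain ⟨i, j, c, hij, hM⟩ := hL M (by simp)
    have hgM : g = 1 + single i j c := by
      rw [hprod]; simpa using hM
    have hc : c ∈ fil.F 0 := by
      have : g i j = c := by rw [hgM]; exact elem_entry i j hij c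
      exact this ▸ hg i j
    exact ⟨[M], by
      intro M' hM'
      simp only [List.mem_singleton] at hM'
      subst hM'
      exact ⟨i, j, c, hij, hc, hM⟩, by simpa using hprod⟩
  | [M, N], _ =>
    obtain ⟨i₁, j₁, c₁, h₁, hM⟩ := hL M (by simp)
    obtain ⟨i₂, j₂, c₂, h₂, hN⟩ := hL N (by simp)
    have hgMN : g = (1 + single i₁ j₁ c₁) * (1 + single i₂ j₂ c₂) := by
      rw [hprod]; simp [hM, hN]
    rcases fin2_pos i₁ j₁ i₂ j₂ h₁ h₂ with ⟨hi, hj⟩ | ⟨hi, hj⟩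
    · -- same position: product is a single elementary matrix
      subst hi; subst hj
      have key : g = 1 + single i₁ j₁ (c₁ + c₂) := by
        rw [hgMN, elem_mul_same i₁ j₁ h₁]
      have hc : c₁ + c₂ ∈ fil.F 0 := by
        have : g i₁ j₁ = c₁ + c₂ := by rw [key]; exact elem_entry i₁ j₁ h₁ _
        exact this ▸ hg i₁ j₁
      refine ⟨[1 + single i₁ j₁ (c₁ + c₂)], ?_, by simpa using key⟩
      intro M' hM'
      simp only [List.mem_singleton] at hM'
      subst hM'
      exact ⟨i₁, j₁, c₁ + c₂, h₁, hc, rfl⟩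
    · -- transposed positions: both coefficients are entries of g
      subst hi; subst hj
      have hc₁ : c₁ ∈ fil.F 0 := by
        have : g i₁ j₁ = c₁ := by rw [hgMN]; exact elem_mul_swap_fst i₁ j₁ h₁ c₁ c₂
        exact this ▸ hg i₁ j₁
      have hc₂ : c₂ ∈ fil.F 0 := by
        have : g j₁ i₁ = c₂ := by rw [hgMN]; exact elem_mul_swap_snd i₁ j₁ h₁ c₁ c₂
        exact this ▸ hg j₁ i₁
      refine ⟨[M, N], ?_, hprod⟩
      intro M' hM'
      simp only [List.mem_cons, List.mem_singleton] at hM'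
      rcases hM' with rfl | rfl | h
      · exact ⟨i₁, j₁, c₁, h₁, hc₁, hM⟩
      · exact ⟨j₁, i₁, c₂, h₁.symm, hc₂, hN⟩
      · exact absurd h List.not_mem_nil
  | _ :: _ :: _ :: _, hlen => simp at hlen
end

section
/- For n ≥ 3, the group E_n(A) generated by elementary matrices is a normal subgroup of GL_n(A) for any commutative ring A (Suslin's normality theorem). -/
open Matrix

namespace SuslinAux

variable {A : Type*} [CommRing A] {n : ℕ}

/-- rank-one product rule -/
lemma vvm (v r v' r' : Fin n → A) :
    vecMulVec v r * vecMulVec v' r' = (r ⬝ᵥ v') • vecMulVec v r' := by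
  ext i j
  simp only [Matrix.mul_apply, vecMulVec_apply, Matrix.smul_apply, dotProduct, smul_eq_mul,
    Finset.sum_mul, Finset.mul_sum]
  exact Finset.sum_congr rfl fun k _ => by ring

/-- the unit `1 + v rᵀ` when `r ⬝ᵥ v = 0`. -/
def mkE (v r : Fin n → A) (h : r ⬝ᵥ v = 0) : Matrix.GeneralLinearGroup (Fin n) A where
  val := 1 + vecMulVec v r
  inv := 1 - vecMulVec v r
  val_inv := by
    have hc : vecMulVec v r * vecMulVec v r = 0 := by rw [vvm, h, zero_smul]
    have : (1 + vecMulVec v r) * (1 - vecMulVec v r)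
        = 1 - vecMulVec v r * vecMulVec v r := by noncomm_ring
    rw [this, hc, sub_zero]
  inv_val := by
    have hc : vecMulVec v r * vecMulVec v r = 0 := by rw [vvm, h, zero_smul]
    have : (1 - vecMulVec v r) * (1 + vecMulVec v r)
        = 1 - vecMulVec v r * vecMulVec v r := by noncomm_ring
    rw [this, hc, sub_zero]

@[simp] lemma mkE_val (v r : Fin n → A) (h : r ⬝ᵥ v = 0) :
    (mkE v r h : Matrix (Fin n) (Fin n) A) = 1 + vecMulVec v r := rfl

lemma mkE_congr {v v' r r' : Fin n → A} (hv : v = v') (hr : r = r')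
    {h : r ⬝ᵥ v = 0} {h' : r' ⬝ᵥ v' = 0} : mkE v r h = mkE v' r' h' := by
  subst hv; subst hr; rfl

lemma mkE_zero_row (v : Fin n → A) (h : (0 : Fin n → A) ⬝ᵥ v = 0) :
    mkE v 0 h = 1 := by
  apply Units.ext
  show 1 + vecMulVec v 0 = 1
  ext i j; simp [vecMulVec_apply]

lemma mkE_zero_col (r : Fin n → A) (h : r ⬝ᵥ (0 : Fin n → A) = 0) :
    mkE 0 r h = 1 := by
  apply Units.ext
  show 1 + vecMulVec 0 r = 1
  ext i j; simp [vecMulVec_apply]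

lemma mkE_mul_row (v r₁ r₂ : Fin n → A) (h₁ : r₁ ⬝ᵥ v = 0) (h₂ : r₂ ⬝ᵥ v = 0)
    (h₃ : (r₁ + r₂) ⬝ᵥ v = 0) :
    mkE v r₁ h₁ * mkE v r₂ h₂ = mkE v (r₁ + r₂) h₃ := by
  apply Units.ext
  show (1 + vecMulVec v r₁) * (1 + vecMulVec v r₂) = 1 + vecMulVec v (r₁ + r₂)
  have hc : vecMulVec v r₁ * vecMulVec v r₂ = 0 := by rw [vvm, h₁, zero_smul]
  have hadd : vecMulVec v (r₁ + r₂) = vecMulVec v r₁ + vecMulVec v r₂ := by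
    ext i j; simp [vecMulVec_apply, mul_add]
  rw [hadd]
  have : (1 + vecMulVec v r₁) * (1 + vecMulVec v r₂)
      = 1 + vecMulVec v r₁ + vecMulVec v r₂ + vecMulVec v r₁ * vecMulVec v r₂ := by
    noncomm_ring
  rw [this, hc, add_zero, add_assoc]

lemma mkE_mul_col (v₁ v₂ r : Fin n → A) (h₁ : r ⬝ᵥ v₁ = 0) (h₂ : r ⬝ᵥ v₂ = 0)
    (h₃ : r ⬝ᵥ (v₁ + v₂) = 0) :
    mkE v₁ r h₁ * mkE v₂ r h₂ = mkE (v₁ + v₂) r h₃ := by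
  apply Units.ext
  show (1 + vecMulVec v₁ r) * (1 + vecMulVec v₂ r) = 1 + vecMulVec (v₁ + v₂) r
  have hc : vecMulVec v₁ r * vecMulVec v₂ r = 0 := by rw [vvm, h₂, zero_smul]
  have hadd : vecMulVec (v₁ + v₂) r = vecMulVec v₁ r + vecMulVec v₂ r := by
    ext i j; simp [vecMulVec_apply, add_mul]
  rw [hadd]
  have : (1 + vecMulVec v₁ r) * (1 + vecMulVec v₂ r)
      = 1 + vecMulVec v₁ r + vecMulVec v₂ r + vecMulVec v₁ r * vecMulVec v₂ r := by
    noncomm_ring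
  rw [this, hc, add_zero, add_assoc]


def Sset (A : Type*) [CommRing A] (n : ℕ) : Set (Matrix.GeneralLinearGroup (Fin n) A) :=
  {g : Matrix.GeneralLinearGroup (Fin n) A |
      ∃ (i j : Fin n) (c : A), i ≠ j ∧
        (g : Matrix (Fin n) (Fin n) A) = 1 + Matrix.single i j c}

/-- vecMulVec of singles is a std basis matrix -/
lemma dot_sum' {ι : Type*} (s : Finset ι) (f : ι → Fin n → A) (v : Fin n → A) :
    v ⬝ᵥ (∑ t ∈ s, f t) = ∑ t ∈ s, v ⬝ᵥ f t := by
  simp only [dotProduct, Finset.sum_apply, Finset.mul_sum]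
  exact Finset.sum_comm

lemma sum_dot' {ι : Type*} (s : Finset ι) (f : ι → Fin n → A) (v : Fin n → A) :
    (∑ t ∈ s, f t) ⬝ᵥ v = ∑ t ∈ s, f t ⬝ᵥ v := by
  simp only [dotProduct, Finset.sum_apply, Finset.sum_mul]
  exact Finset.sum_comm

lemma vvm_single (i j : Fin n) (b c : A) :
    vecMulVec (Pi.single i b) (Pi.single j c) = Matrix.single i j (b * c) := by
  ext a d
  by_cases h1 : a = i
  · subst h1
    by_cases h2 : d = j
    · subst h2; simp [vecMulVec_apply, Pi.single_apply, Matrix.single]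
    · simp [vecMulVec_apply, Pi.single_apply, Matrix.single, h2, Ne.symm h2]
  · by_cases h2 : d = j
    · subst h2; simp [vecMulVec_apply, Pi.single_apply, Matrix.single, h1, Ne.symm h1]
    · simp [vecMulVec_apply, Pi.single_apply, Matrix.single, h1, h2, Ne.symm h1, Ne.symm h2]

lemma el_mem (i j : Fin n) (hij : i ≠ j) (c : A) (h : Pi.single j c ⬝ᵥ Pi.single i (1:A) = 0) :
    mkE (Pi.single i 1) (Pi.single j c) h ∈ Subgroup.closure (Sset A n) := by
  apply Subgroup.subset_closure
  exact ⟨i, j, c, hij, by rw [mkE_val, vvm_single, one_mul]⟩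

lemma sum_row_mem {ι : Type*} [DecidableEq ι] (v : Fin n → A) (s : Finset ι) (f : ι → Fin n → A)
    (h0 : ∀ t, f t ⬝ᵥ v = 0)
    (hmem : ∀ t ∈ s, ∀ h, mkE v (f t) h ∈ Subgroup.closure (Sset A n)) :
    ∀ h, mkE v (∑ t ∈ s, f t) h ∈ Subgroup.closure (Sset A n) := by
  induction s using Finset.induction with
  | empty =>
    intro h
    rw [mkE_congr rfl Finset.sum_empty (h' := by simp), mkE_zero_row]
    exact Subgroup.one_mem _
  | @insert a s ha ih =>
    intro h
    have hsum : (∑ t ∈ s, f t) ⬝ᵥ v = 0 := by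
      rw [sum_dot']
      exact Finset.sum_eq_zero fun t _ => h0 t
    rw [mkE_congr rfl (Finset.sum_insert ha)
      (h' := by rw [add_dotProduct, h0 a, hsum, add_zero])]
    rw [← mkE_mul_row v (f a) (∑ t ∈ s, f t) (h0 a) hsum]
    exact Subgroup.mul_mem _ (hmem a (Finset.mem_insert_self a s) _)
      (ih (fun t ht => hmem t (Finset.mem_insert_of_mem ht)) _)

lemma sum_col_mem {ι : Type*} [DecidableEq ι] (r : Fin n → A) (s : Finset ι) (f : ι → Fin n → A)
    (h0 : ∀ t, r ⬝ᵥ f t = 0)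
    (hmem : ∀ t ∈ s, ∀ h, mkE (f t) r h ∈ Subgroup.closure (Sset A n)) :
    ∀ h, mkE (∑ t ∈ s, f t) r h ∈ Subgroup.closure (Sset A n) := by
  induction s using Finset.induction with
  | empty =>
    intro h
    rw [mkE_congr Finset.sum_empty rfl (h' := by simp), mkE_zero_col]
    exact Subgroup.one_mem _
  | @insert a s ha ih =>
    intro h
    have hsum : r ⬝ᵥ (∑ t ∈ s, f t) = 0 := by
      rw [dot_sum']
      exact Finset.sum_eq_zero fun t _ => h0 t
    rw [mkE_congr (Finset.sum_insert ha) rfl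
      (h' := by rw [dotProduct_add, h0 a, hsum, add_zero])]
    rw [← mkE_mul_col (f a) (∑ t ∈ s, f t) r (h0 a) hsum]
    exact Subgroup.mul_mem _ (hmem a (Finset.mem_insert_self a s) _)
      (ih (fun t ht => hmem t (Finset.mem_insert_of_mem ht)) _)

/-- column with a zero at k, times row e_k : in E -/
lemma col_mem (u : Fin n → A) (k : Fin n) (c : A) (hu : u k = 0) :
    ∀ h, mkE u (Pi.single k c) h ∈ Subgroup.closure (Sset A n) := by
  have hrepr : u = ∑ m : Fin n, Pi.single m (u m) := (Finset.univ_sum_single u).symm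
  intro h
  rw [mkE_congr hrepr rfl (h' := by rwa [← hrepr])]
  apply sum_col_mem
  · intro t
    rw [single_dotProduct]
    by_cases ht : t = k
    · subst ht; simp [hu]
    · simp [Pi.single_apply, Ne.symm ht]
  · intro t _ h'
    by_cases ht : t = k
    · subst ht
      rw [mkE_congr (v' := (0 : Fin n → A)) (by rw [hu, Pi.single_zero]) rfl
        (h' := by simp), mkE_zero_col]
      exact Subgroup.one_mem _
    · have : vecMulVec (Pi.single t (u t)) (Pi.single k c)
          = vecMulVec (Pi.single t (1:A)) (Pi.single k (u t * c)) := by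
        rw [vvm_single, vvm_single, one_mul]
      rw [show mkE (Pi.single t (u t)) (Pi.single k c) h'
          = mkE (Pi.single t (1:A)) (Pi.single k (u t * c)) (by simp [Pi.single_apply, Ne.symm ht])
          from Units.ext (by rw [mkE_val, mkE_val, this])]
      exact el_mem t k ht _ _

/-- row with a zero at k, times column e_k (scaled) : in E -/
lemma row_mem (r : Fin n → A) (k : Fin n) (c : A) (hr : r k = 0) :
    ∀ h, mkE (Pi.single k c) r h ∈ Subgroup.closure (Sset A n) := by
  have hrepr : r = ∑ m : Fin n, Pi.single m (r m) := (Finset.univ_sum_single r).symm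
  intro h
  rw [mkE_congr rfl hrepr (h' := by rwa [← hrepr])]
  apply sum_row_mem
  · intro t
    rw [dotProduct_single]
    by_cases ht : t = k
    · subst ht; simp [hr]
    · simp [Pi.single_apply, ht]
  · intro t _ h'
    by_cases ht : t = k
    · subst ht
      rw [mkE_congr (r' := (0 : Fin n → A)) rfl (by rw [hr, Pi.single_zero])
        (h' := by simp), mkE_zero_row]
      exact Subgroup.one_mem _
    · have : vecMulVec (Pi.single k c) (Pi.single t (r t))
          = vecMulVec (Pi.single k (1:A)) (Pi.single t (c * r t)) := by
        rw [vvm_single, vvm_single, one_mul, mul_comm]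
      rw [show mkE (Pi.single k c) (Pi.single t (r t)) h'
          = mkE (Pi.single k (1:A)) (Pi.single t (c * r t)) (by simp [Pi.single_apply, ht])
          from Units.ext (by rw [mkE_val, mkE_val, this])]
      exact el_mem k t (Ne.symm ht) _ _


/-- Commutator lemma: if `r ⬝ᵥ u = 0` and both `u` and `r` vanish at `k`,
then `1 + u rᵀ` lies in `E`. -/
lemma lemA (u r : Fin n → A) (k : Fin n) (hd : r ⬝ᵥ u = 0) (hu : u k = 0) (hr : r k = 0) :
    ∀ h, mkE u r h ∈ Subgroup.closure (Sset A n) := by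
  intro h
  have hXd : Pi.single k (1:A) ⬝ᵥ u = 0 := by rw [single_dotProduct, one_mul, hu]
  have hYd : r ⬝ᵥ Pi.single k (1:A) = 0 := by rw [dotProduct_single, hr, zero_mul]
  set X := mkE u (Pi.single k (1:A)) hXd with hX
  set Y := mkE (Pi.single k (1:A)) r hYd with hY
  have hXmem : X ∈ Subgroup.closure (Sset A n) := col_mem u k 1 hu hXd
  have hYmem : Y ∈ Subgroup.closure (Sset A n) := row_mem r k 1 hr hYd
  have key : mkE u r h = X * Y * X⁻¹ * Y⁻¹ := by
    apply Units.ext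
    set a := vecMulVec u (Pi.single k (1:A)) with ha
    set b := vecMulVec (Pi.single k (1:A)) r with hb
    set c := vecMulVec u r with hc
    have hkk : Pi.single k (1:A) ⬝ᵥ Pi.single k (1:A) = 1 := by
      rw [single_dotProduct, one_mul, Pi.single_eq_same]
    have hab : a * b = c := by rw [ha, hb, vvm, hkk, one_smul]
    have hba : b * a = 0 := by rw [ha, hb, vvm, hd, zero_smul]
    have haa : a * a = 0 := by rw [ha, vvm, hXd, zero_smul]
    have hbb : b * b = 0 := by rw [hb, vvm, hYd, zero_smul]
    have hca : c * a = 0 := by rw [ha, hc, vvm, hd, zero_smul]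
    have hcb : c * b = 0 := by rw [hb, hc, vvm, hYd, zero_smul]
    show (1 + c) = ((1 + a) * (1 + b)) * (1 - a) * (1 - b)
    have e1 : (1 + a) * (1 + b) = 1 + a + b + c := by
      rw [← hab]; noncomm_ring
    have e2 : (1 + a + b + c) * (1 - a) = 1 + b + c := by
      have : (1 + a + b + c) * (1 - a)
          = 1 + b + c - a * a - b * a - c * a := by noncomm_ring
      rw [this, haa, hba, hca, sub_zero, sub_zero, sub_zero]
    have e3 : (1 + b + c) * (1 - b) = 1 + c := by
      have : (1 + b + c) * (1 - b) = 1 + c - b * b - c * b := by noncomm_ring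
      rw [this, hbb, hcb, sub_zero, sub_zero]
    rw [e1, e2, e3]
  rw [key]
  exact mul_mem (mul_mem (mul_mem hXmem hYmem) (inv_mem hXmem)) (inv_mem hYmem)

/-- there is a third index -/
lemma third_index (hn : 3 ≤ n) (i j : Fin n) : ∃ k : Fin n, k ≠ i ∧ k ≠ j := by
  by_contra hcon
  push_neg at hcon
  have hsub : (Finset.univ : Finset (Fin n)) ⊆ {i, j} := by
    intro k _
    by_cases hk : k = i
    · simp [hk]
    · simp [hcon k hk]
  have := Finset.card_le_card hsub
  simp only [Finset.card_univ, Fintype.card_fin] at this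
  have h2 : ({i, j} : Finset (Fin n)).card ≤ 2 := by
    apply le_trans (Finset.card_insert_le _ _)
    simp
  omega

/-- Suslin's lemma -/
lemma suslin (hn : 3 ≤ n) (v : Fin n → A) (i j : Fin n) (_hij : i ≠ j) (a : A) :
    ∀ h, mkE v (a • (v i • (Pi.single j 1 : Fin n → A) - v j • (Pi.single i 1 : Fin n → A))) h
      ∈ Subgroup.closure (Sset A n) := by
  intro h
  obtain ⟨k, hki, hkj⟩ := third_index hn i j
  set r := a • (v i • (Pi.single j 1 : Fin n → A) - v j • (Pi.single i 1 : Fin n → A)) with hrdef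
  have hrk : r k = 0 := by
    simp [hrdef, Pi.single_apply, hki.symm, hkj.symm]
  have hrv : r ⬝ᵥ v = 0 := h
  -- split v into (update v k 0) + single k (v k)
  have hsplit : v = Function.update v k 0 + Pi.single k (v k) := by
    ext m
    by_cases hm : m = k
    · subst hm; simp
    · simp [Function.update_of_ne hm, Pi.single_apply, hm]
  have hdot_single : r ⬝ᵥ Pi.single k (v k) = 0 := by
    rw [dotProduct_single, hrk, zero_mul]
  have hdot_upd : r ⬝ᵥ Function.update v k 0 = 0 := by
    have := hrv
    rw [hsplit, dotProduct_add, hdot_single, add_zero] at this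
    exact this
  rw [mkE_congr hsplit rfl (h' := by rw [dotProduct_add, hdot_upd, hdot_single, add_zero])]
  rw [← mkE_mul_col _ _ _ hdot_upd hdot_single]
  refine mul_mem ?_ ?_
  · exact lemA _ _ k hdot_upd (by simp) hrk hdot_upd
  · exact row_mem r k (v k) hrk hdot_single


lemma mul_vvm (M : Matrix (Fin n) (Fin n) A) (v r : Fin n → A) :
    M * vecMulVec v r = vecMulVec (M *ᵥ v) r := by
  ext i j
  simp only [Matrix.mul_apply, vecMulVec_apply, Matrix.mulVec, dotProduct, Finset.sum_mul]
  exact Finset.sum_congr rfl fun k _ => by ring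

lemma vvm_mul (M : Matrix (Fin n) (Fin n) A) (v r : Fin n → A) :
    vecMulVec v r * M = vecMulVec v (r ᵥ* M) := by
  ext i j
  simp only [Matrix.mul_apply, vecMulVec_apply, Matrix.vecMul, dotProduct, Finset.mul_sum]
  exact Finset.sum_congr rfl fun k _ => by ring

/-- main lemma: if `v` is unimodular and `w ⬝ᵥ v = 0` then `1 + v wᵀ ∈ E`. -/
lemma unimod (hn : 3 ≤ n) (v w u : Fin n → A) (huv : u ⬝ᵥ v = 1) (hwv : w ⬝ᵥ v = 0) :
    ∀ h, mkE v w h ∈ Subgroup.closure (Sset A n) := by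
  intro h
  set f : Fin n × Fin n → Fin n → A := fun pq =>
    (w pq.1 * u pq.2) • (v pq.2 • (Pi.single pq.1 1 : Fin n → A)
      - v pq.1 • (Pi.single pq.2 1 : Fin n → A)) with hf
  have h0 : ∀ t, f t ⬝ᵥ v = 0 := by
    rintro ⟨p, q⟩
    simp only [hf, smul_dotProduct, sub_dotProduct, single_dotProduct,
      smul_eq_mul, one_mul]
    ring
  have hw : w = ∑ t ∈ Finset.univ ×ˢ Finset.univ, f t := by
    ext m
    rw [Finset.sum_apply, Finset.sum_product]
    have e : ∀ p q : Fin n, f (p, q) m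
        = (w p * (Pi.single p 1 : Fin n → A) m) * (u q * v q) - (w p * v p) * (u q * (Pi.single q 1 : Fin n → A) m) := by
      intro p q
      simp only [hf, Pi.smul_apply, Pi.sub_apply, smul_eq_mul]
      ring
    simp only [e, Finset.sum_sub_distrib, ← Finset.sum_mul_sum]
    have e1 : ∑ p : Fin n, w p * (Pi.single p 1 : Fin n → A) m = w m := by
      simp [Pi.single_apply, mul_ite, Finset.sum_ite_eq]
    have e2 : ∑ q : Fin n, u q * v q = 1 := huv
    have e3 : ∑ p : Fin n, w p * v p = 0 := hwv
    rw [e1, e2, e3, mul_one, zero_mul, sub_zero]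
  rw [mkE_congr rfl hw (h' := by rwa [← hw])]
  apply sum_row_mem v _ f h0
  rintro ⟨p, q⟩ _ h'
  by_cases hpq : p = q
  · subst hpq
    have hzero : f (p, p) = 0 := by
      simp only [hf, sub_self, smul_zero]
    rw [mkE_congr rfl hzero (h' := by simp), mkE_zero_row]
    exact Subgroup.one_mem _
  · exact suslin hn v q p (Ne.symm hpq) (w p * u q) _

/-- conjugates of generators lie in E -/
lemma conj_mem (hn : 3 ≤ n) (g x : Matrix.GeneralLinearGroup (Fin n) A) (hx : x ∈ Sset A n) :
    g * x * g⁻¹ ∈ Subgroup.closure (Sset A n) := by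
  obtain ⟨i, j, c, hij, hmat⟩ := hx
  set v : Fin n → A := fun m => (g : Matrix (Fin n) (Fin n) A) m i with hv
  set w : Fin n → A := fun m => c * (↑g⁻¹ : Matrix (Fin n) (Fin n) A) j m with hwdef
  set u : Fin n → A := fun m => (↑g⁻¹ : Matrix (Fin n) (Fin n) A) i m with hu
  have hgg : (↑g⁻¹ : Matrix (Fin n) (Fin n) A) * (↑g : Matrix (Fin n) (Fin n) A) = 1 := by
    rw [← Units.val_mul, inv_mul_cancel, Units.val_one]
  have hgg' : (↑g : Matrix (Fin n) (Fin n) A) * (↑g⁻¹ : Matrix (Fin n) (Fin n) A) = 1 := by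
    rw [← Units.val_mul, mul_inv_cancel, Units.val_one]
  have happ : ∀ a b : Fin n,
      ∑ m, (↑g⁻¹ : Matrix (Fin n) (Fin n) A) a m * (↑g : Matrix (Fin n) (Fin n) A) m b
        = (1 : Matrix (Fin n) (Fin n) A) a b := by
    intro a b
    rw [← Matrix.mul_apply, hgg]
  have hwv : w ⬝ᵥ v = 0 := by
    simp only [dotProduct, hwdef, hv, mul_assoc, ← Finset.mul_sum]
    rw [happ j i, Matrix.one_apply_ne (Ne.symm hij), mul_zero]
  have huv : u ⬝ᵥ v = 1 := by
    simp only [dotProduct, hu, hv]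
    rw [happ i i, Matrix.one_apply_eq]
  have key : g * x * g⁻¹ = mkE v w hwv := by
    apply Units.ext
    show (↑g : Matrix (Fin n) (Fin n) A) * (↑x : Matrix (Fin n) (Fin n) A) * (↑g⁻¹ : Matrix (Fin n) (Fin n) A) = 1 + vecMulVec v w
    rw [hmat, mul_add, mul_one, add_mul, hgg']
    congr 1
    have hstd : Matrix.single i j c
        = vecMulVec (Pi.single i (1:A)) (Pi.single j c) := by
      rw [vvm_single, one_mul]
    rw [hstd, mul_vvm, vvm_mul]
    ext m l
    simp only [vecMulVec_apply, hv, hwdef, Matrix.mulVec_single, Matrix.single_vecMul, Pi.smul_apply, Matrix.col_apply,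
      Matrix.row_apply, op_smul_eq_mul, smul_eq_mul, mul_one]
  rw [key]
  exact unimod hn v w u huv hwv _

end SuslinAux

/-- Suslin's normality theorem: for `n ≥ 3` and `A` a commutative ring, the
subgroup `Eₙ(A)` of `GLₙ(A)` generated by elementary matrices is normal. -/
theorem suslin_normality {A : Type*} [CommRing A] {n : ℕ} (hn : 3 ≤ n) :
    (Subgroup.closure {g : Matrix.GeneralLinearGroup (Fin n) A |
      ∃ (i j : Fin n) (c : A), i ≠ j ∧
        (g : Matrix (Fin n) (Fin n) A) = 1 + Matrix.single i j c}).Normal := by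
  constructor
  intro x hx
  refine Subgroup.closure_induction
    (p := fun x _ => ∀ g, g * x * g⁻¹ ∈ Subgroup.closure (SuslinAux.Sset A n))
    ?_ ?_ ?_ ?_ hx
  · intro y hy g
    exact SuslinAux.conj_mem hn g y hy
  · intro g
    simpa using Subgroup.one_mem _
  · intro y z _ _ ihy ihz g
    have : g * (y * z) * g⁻¹ = (g * y * g⁻¹) * (g * z * g⁻¹) := by group
    rw [this]
    exact mul_mem (ihy g) (ihz g)
  · intro y _ ihy g
    have : g * y⁻¹ * g⁻¹ = (g * y * g⁻¹)⁻¹ := by group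
    rw [this]
    exact inv_mem (ihy g)
end
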